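/- Let y, z ∈ ℂ with y + z ≠ 0, and let r₁, r₂ : (0, ∞) → ℂ be functions such that for every f₀ > 0: r₁(f₀)·r₂(f₀) = (1 + f₀)·y·z and r₁(f₀) + r₂(f₀) = (1 + f₀)·(y + z) (i.e. r₁(f₀), r₂(f₀) are the roots of x² − (1+f₀)(y+z)x + (1+f₀)yz = 0). If r₁ is bounded on (0, ∞), then r₁(f₀) → y·z/(y + z) as f₀ → ∞. -/

import Mathlib

/-- If for every `f₀ > 0` the values `r₁(f₀), r₂(f₀)` are the two roots
of `x² − (1+f₀)(y+z)x + (1+f₀)yz = 0` (with `y + z ≠ 0`) and `r₁` is bounded on `(0,∞)`,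
then `r₁(f₀) → yz/(y+z)` as `f₀ → ∞`. -/
theorem stmt_17 (y z : ℂ) (hyz : y + z ≠ 0) (r₁ r₂ : ℝ → ℂ)
    (hprod : ∀ f₀ : ℝ, 0 < f₀ → r₁ f₀ * r₂ f₀ = (1 + (f₀ : ℂ)) * y * z)
    (hsum : ∀ f₀ : ℝ, 0 < f₀ → r₁ f₀ + r₂ f₀ = (1 + (f₀ : ℂ)) * (y + z))
    (hbdd : ∃ Cb : ℝ, ∀ f₀ : ℝ, 0 < f₀ → ‖r₁ f₀‖ ≤ Cb) :
    Filter.Tendsto r₁ Filter.atTop (nhds (y * z / (y + z))) := by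
  obtain ⟨C, hC⟩ := hbdd
  have hCnn : 0 ≤ C := le_trans (norm_nonneg _) (hC 1 one_pos)
  set c := y * z / (y + z) with hc
  have key : ∀ f₀ : ℝ, 0 < f₀ → r₁ f₀ - c = (r₁ f₀)^2 / ((1 + (f₀:ℂ)) * (y + z)) := by
    intro f₀ hf
    have hne : (1 + (f₀:ℂ)) ≠ 0 := by
      have : ((1 + f₀ : ℝ) : ℂ) ≠ 0 := by
        exact_mod_cast ne_of_gt (by linarith : (0:ℝ) < 1 + f₀)
      simpa using this
    have h1 : r₂ f₀ = (1 + (f₀:ℂ)) * (y + z) - r₁ f₀ := by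
      have := hsum f₀ hf; linear_combination this
    have h2 := hprod f₀ hf
    rw [h1] at h2
    rw [hc]
    field_simp
    linear_combination h2
  have h0 : Filter.Tendsto (fun f₀ : ℝ => r₁ f₀ - c) Filter.atTop (nhds 0) := by
    refine squeeze_zero_norm' (a := fun f₀ : ℝ => C^2 / ‖y+z‖ * (1+f₀)⁻¹) ?_ ?_
    · filter_upwards [Filter.eventually_gt_atTop 0] with f₀ hf
      rw [key f₀ hf]
      have habs : ‖1 + (f₀:ℂ)‖ = 1 + f₀ := by
        rw [show (1 + (f₀:ℂ)) = ((1 + f₀ : ℝ) : ℂ) by push_cast; ring,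
          Complex.norm_real, Real.norm_eq_abs, abs_of_pos (by linarith)]
      have hpos : (0:ℝ) < 1 + f₀ := by linarith
      rw [show ‖(r₁ f₀)^2 / ((1 + (f₀:ℂ)) * (y + z))‖
          = ‖r₁ f₀‖^2 / ((1+f₀) * ‖y+z‖) by
        simp [map_div₀, map_mul, map_pow, habs]]
      have hyzpos : 0 < ‖y + z‖ := by
        simpa [norm_pos_iff] using hyz
      rw [show C^2 / ‖y+z‖ * (1+f₀)⁻¹ = C^2 / ((1+f₀) * ‖y+z‖) by
        field_simp]
      gcongr
      exact hC f₀ hf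
    · have h1 : Filter.Tendsto (fun f₀ : ℝ => 1 + f₀) Filter.atTop Filter.atTop :=
        Filter.tendsto_atTop_add_const_left _ 1 Filter.tendsto_id
      have := h1.inv_tendsto_atTop.const_mul (C^2 / ‖y+z‖)
      simpa using this
  have := h0.add_const c
  simpa using this
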